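/- arXiv:2106.01715 — 5 statements merged into one kernel-verified Lean document; each statement's English description precedes it below -/
import Mathlib

section
/- Let f be a function on (0,∞) of bounded variation, of rapid decay at infinity, O(u²) as u→0, with ∫₀^∞ f(t)dt = 0. Define E(f)(u) := u^{1/2}·∑_{n>0} f(nu). Then E(f)(u) is well-defined pointwise, is O(u^{1/2}) as u→0, and of rapid decay as u→∞. -/
open MeasureTheory Set

lemma aux_shift_summable : Summable (fun n : ℕ => 1 / ((n : ℝ) + 1) ^ 2) := by
  have h2 : Summable (fun n : ℕ => 1 / (n : ℝ) ^ 2) :=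
    Real.summable_one_div_nat_pow.2 one_lt_two
  have := (summable_nat_add_iff (f := fun n : ℕ => 1 / (n : ℝ) ^ 2) 1).2 h2
  simpa using this

lemma aux_summable (f : ℝ → ℝ) (C : ℝ) (hC : ∀ u : ℝ, 1 ≤ u → |f u| ≤ C / u ^ 2)
    {u : ℝ} (hu : 0 < u) : Summable (fun n : ℕ => f (((n : ℝ) + 1) * u)) := by
  have hu' : u ≠ 0 := ne_of_gt hu
  apply Summable.of_norm_bounded_eventually_nat
    (g := fun n => |C| / u ^ 2 * (1 / ((n : ℝ) + 1) ^ 2)) (aux_shift_summable.mul_left _)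
  filter_upwards [Filter.eventually_ge_atTop ⌈1/u⌉₊] with n hn
  have hn1 : (0:ℝ) < (n : ℝ) + 1 := by positivity
  have h1 : (1:ℝ) ≤ ((n : ℝ) + 1) * u := by
    have h2 : (1:ℝ)/u ≤ (n : ℝ) + 1 := by
      calc (1:ℝ)/u ≤ (⌈1/u⌉₊ : ℝ) := Nat.le_ceil _
      _ ≤ (n : ℝ) := by exact_mod_cast hn
      _ ≤ (n : ℝ) + 1 := by linarith
    calc (1:ℝ) = (1/u) * u := by field_simp
    _ ≤ ((n : ℝ) + 1) * u := by apply mul_le_mul_of_nonneg_right h2 hu.le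
  have hb := hC _ h1
  have hx : (0:ℝ) < (((n : ℝ) + 1) * u) ^ 2 := by positivity
  calc ‖f (((n : ℝ) + 1) * u)‖ = |f (((n : ℝ) + 1) * u)| := rfl
  _ ≤ C / (((n : ℝ) + 1) * u) ^ 2 := hb
  _ ≤ |C| / (((n : ℝ) + 1) * u) ^ 2 := by
      apply div_le_div_of_nonneg_right (le_abs_self C) hx.le
  _ = |C| / u ^ 2 * (1 / ((n : ℝ) + 1) ^ 2) := by
      rw [mul_pow, mul_one_div, div_div, mul_comm (u ^ 2)]

lemma aux_meas (f : ℝ → ℝ) (hneg : ∀ x < (0:ℝ), f x = 0)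
    (hBV : eVariationOn f (Set.Ici 0) ≠ ⊤) : Measurable f := by
  obtain ⟨p, q, hp, hq, hpq⟩ :=
    (BoundedVariationOn.locallyBoundedVariationOn hBV).exists_monotoneOn_sub_monotoneOn
  have hfg : f = fun x => if x < 0 then 0 else p (max x 0) - q (max x 0) := by
    funext x
    rcases lt_or_ge x 0 with hx | hx
    · simp [hx, hneg x hx]
    · have hm : max x 0 = x := max_eq_left hx
      simp only [not_lt.2 hx, if_neg (not_lt.2 hx), hm]
      have := congrFun hpq x
      simpa using this
  rw [hfg]
  have hmp : Monotone (fun x : ℝ => p (max x 0)) := fun x y hxy =>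
    hp (le_max_right x 0) (le_max_right y 0) (max_le_max hxy le_rfl)
  have hmq : Monotone (fun x : ℝ => q (max x 0)) := fun x y hxy =>
    hq (le_max_right x 0) (le_max_right y 0) (max_le_max hxy le_rfl)
  have : ({x : ℝ | x < 0} : Set ℝ) = Set.Iio 0 := rfl
  exact Measurable.ite (by simpa [this] using measurableSet_Iio) measurable_const
    (hmp.measurable.sub hmq.measurable)

lemma aux_integrable (f : ℝ → ℝ) (hmeas : Measurable f)
    (hdecay : ∀ N : ℕ, ∃ C : ℝ, ∀ u : ℝ, 1 ≤ u → |f u| ≤ C / u ^ N)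
    (hO2 : ∃ C : ℝ, ∀ u ∈ Set.Ioc (0:ℝ) 1, |f u| ≤ C * u ^ 2) :
    IntegrableOn f (Set.Ioi 0) := by
  obtain ⟨C0, hC0⟩ := hO2
  obtain ⟨C2, hC2⟩ := hdecay 2
  have h1 : IntegrableOn f (Set.Ioc (0:ℝ) 1) := by
    apply Measure.integrableOn_of_bounded (M := |C0|)
    · simp
    · exact hmeas.aestronglyMeasurable
    · filter_upwards [ae_restrict_mem measurableSet_Ioc] with x hx
      calc ‖f x‖ ≤ C0 * x ^ 2 := hC0 x hx
      _ ≤ |C0| * 1 := by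
          apply mul_le_mul (le_abs_self C0) _ (by positivity) (abs_nonneg _)
          nlinarith [hx.1, hx.2]
      _ = |C0| := mul_one _
  have h2 : IntegrableOn f (Set.Ioi (1:ℝ)) := by
    have hr : IntegrableOn (fun x : ℝ => |C2| * x ^ (-2 : ℝ)) (Set.Ioi (1:ℝ)) :=
      (integrableOn_Ioi_rpow_of_lt (by norm_num) one_pos).const_mul _
    apply Integrable.mono hr hmeas.aestronglyMeasurable.restrict
    filter_upwards [ae_restrict_mem measurableSet_Ioi] with x hx
    have hx1 : (1:ℝ) ≤ x := le_of_lt hx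
    have hx0 : (0:ℝ) < x := lt_of_lt_of_le one_pos hx1
    have hrp : x ^ (-2 : ℝ) = 1 / x ^ 2 := by
      rw [Real.rpow_neg hx0.le, one_div]
      norm_cast
    calc ‖f x‖ ≤ C2 / x ^ 2 := hC2 x hx1
    _ ≤ |C2| / x ^ 2 := div_le_div_of_nonneg_right (le_abs_self C2) (by positivity)
    _ = |C2| * x ^ (-2 : ℝ) := by rw [hrp]; ring
    _ ≤ ‖|C2| * x ^ (-2 : ℝ)‖ := le_abs_self _
  have := h1.union h2
  rwa [Set.Ioc_union_Ioi_eq_Ioi zero_le_one] at this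

set_option maxHeartbeats 1000000 in
lemma aux_key (f : ℝ → ℝ) (hBV : eVariationOn f (Set.Ici 0) ≠ ⊤)
    (hInt : IntegrableOn f (Set.Ioi 0))
    (hint : ∫ t in Set.Ioi (0:ℝ), f t = 0)
    {u : ℝ} (hu : 0 < u)
    (hsum : Summable (fun n : ℕ => f (((n : ℝ) + 1) * u))) :
    |∑' n : ℕ, f (((n : ℝ) + 1) * u)| ≤ (eVariationOn f (Set.Ici 0)).toReal := by
  set s : ℕ → Set ℝ := fun n => Set.Ioc ((n : ℝ) * u) (((n : ℝ) + 1) * u) with hs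
  have hm : ∀ n, MeasurableSet (s n) := fun n => measurableSet_Ioc
  have hsub : ∀ n, s n ⊆ Set.Ioi 0 := by
    intro n x hx
    have : (0:ℝ) ≤ (n : ℝ) * u := by positivity
    exact lt_of_le_of_lt this hx.1
  have hd : Pairwise (Function.onFun Disjoint s) := by
    have key : ∀ m n : ℕ, m < n → Disjoint (s m) (s n) := by
      intro m n hmn
      rw [hs]
      rw [Set.Ioc_disjoint_Ioc]
      have h1 : ((m : ℝ) + 1) * u ≤ (n : ℝ) * u := by
        have : ((m : ℝ) + 1) ≤ (n : ℝ) := by exact_mod_cast hmn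
        exact mul_le_mul_of_nonneg_right this hu.le
      exact le_trans (min_le_left _ _) (le_trans h1 (le_max_right _ _))
    intro m n hmn
    rcases hmn.lt_or_gt with h | h
    · exact key m n h
    · exact (key n m h).symm
  have hU : (⋃ n, s n) = Set.Ioi (0:ℝ) := by
    ext x
    simp only [Set.mem_iUnion, Set.mem_Ioi]
    constructor
    · rintro ⟨n, hn⟩; exact (hsub n) hn
    · intro hx
      have hxu : 0 < x / u := div_pos hx hu
      set k := ⌈x / u⌉₊ with hk
      have hk1 : 1 ≤ k := Nat.one_le_ceil_iff.2 hxu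
      have hcast : ((k - 1 : ℕ) : ℝ) = (k : ℝ) - 1 := by
        push_cast [hk1]; ring
      refine ⟨k - 1, ?_, ?_⟩
      · rw [hcast]
        have h2 : (k : ℝ) < x / u + 1 := Nat.ceil_lt_add_one hxu.le
        have : ((k : ℝ) - 1) * u < (x / u) * u := by
          apply mul_lt_mul_of_pos_right (by linarith) hu
        rwa [div_mul_cancel₀ x (ne_of_gt hu)] at this
      · rw [hcast]
        have h3 : x / u ≤ (k : ℝ) := Nat.le_ceil _
        have : (x / u) * u ≤ ((k : ℝ) - 1 + 1) * u := by
          apply mul_le_mul_of_nonneg_right (by linarith) hu.le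
        rwa [div_mul_cancel₀ x (ne_of_gt hu)] at this
  have hIU : IntegrableOn f (⋃ n, s n) := by rw [hU]; exact hInt
  have hI : HasSum (fun n => ∫ x in s n, f x) 0 := by
    have := hasSum_integral_iUnion hm hd hIU
    rwa [hU, hint] at this
  set e : ℕ → ENNReal :=
    fun n => eVariationOn f (Set.Ici 0 ∩ Set.Icc ((n : ℝ) * u) (((n : ℝ) + 1) * u)) with he
  have he_le : ∀ n, e n ≤ eVariationOn f (Set.Ici 0) :=
    fun n => eVariationOn.mono f Set.inter_subset_left
  have he_top : ∀ n, e n ≠ ⊤ := fun n => ne_top_of_le_ne_top hBV (he_le n)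
  have hesum : ∀ K : ℕ, ∑ n ∈ Finset.range K, e n
      = eVariationOn f (Set.Ici 0 ∩ Set.Icc 0 ((K : ℝ) * u)) := by
    intro K
    induction K with
    | zero =>
      simp only [Finset.range_zero, Finset.sum_empty, Nat.cast_zero, zero_mul]
      rw [Set.Icc_self]
      refine (eVariationOn.subsingleton f ?_).symm
      exact Set.Subsingleton.anti Set.subsingleton_singleton Set.inter_subset_right
    | succ K ih =>
      rw [Finset.sum_range_succ, ih, he]
      have h0K : (0:ℝ) ≤ (K : ℝ) * u := by positivity
      have hKK : (K : ℝ) * u ≤ ((K : ℝ) + 1) * u := by nlinarith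
      have hmem : (K : ℝ) * u ∈ Set.Ici (0:ℝ) := h0K
      have := eVariationOn.Icc_add_Icc f h0K hKK hmem
      rw [this]
      push_cast
      ring_nf
  set v : ℕ → ℝ := fun n => (e n).toReal with hv
  have hV0 : (0:ℝ) ≤ (eVariationOn f (Set.Ici 0)).toReal := ENNReal.toReal_nonneg
  have hvsum_le : ∀ K : ℕ, ∑ n ∈ Finset.range K, v n
      ≤ (eVariationOn f (Set.Ici 0)).toReal := by
    intro K
    rw [hv]
    rw [← ENNReal.toReal_sum (fun n _ => he_top n)]
    apply ENNReal.toReal_mono hBV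
    rw [hesum K]
    exact eVariationOn.mono f Set.inter_subset_left
  have hvS : Summable v := summable_of_sum_range_le (fun n => ENNReal.toReal_nonneg) hvsum_le
  have hvt : ∑' n, v n ≤ (eVariationOn f (Set.Ici 0)).toReal :=
    Summable.tsum_le_of_sum_range_le hvS hvsum_le
  -- pointwise bound
  have hbd : ∀ n : ℕ, |u * f (((n : ℝ) + 1) * u) - ∫ x in s n, f x| ≤ v n * u := by
    intro n
    have hfn : IntegrableOn f (s n) := hInt.mono_set (hsub n)
    have hvol : volume (s n) = ENNReal.ofReal u := by
      rw [hs]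
      simp only [Real.volume_Ioc]
      congr 1
      ring
    have hconst : IntegrableOn (fun _ : ℝ => f (((n : ℝ) + 1) * u)) (s n) := by
      haveI : IsFiniteMeasure (volume.restrict (s n)) := by
        constructor
        rw [Measure.restrict_apply_univ, hvol]
        exact ENNReal.ofReal_lt_top
      exact integrable_const _
    have hc : ∫ _ in s n, f (((n : ℝ) + 1) * u) = u * f (((n : ℝ) + 1) * u) := by
      rw [setIntegral_const, measureReal_def, hvol, ENNReal.toReal_ofReal hu.le, smul_eq_mul]
    have hsplit : u * f (((n : ℝ) + 1) * u) - ∫ x in s n, f x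
        = ∫ x in s n, (f (((n : ℝ) + 1) * u) - f x) := by
      rw [integral_sub hconst hfn, hc]
    rw [hsplit]
    have hfin : volume (s n) < ⊤ := by rw [hvol]; exact ENNReal.ofReal_lt_top
    have hbound : ‖∫ x in s n, (f (((n : ℝ) + 1) * u) - f x)‖
        ≤ v n * (volume (s n)).toReal := by
      apply norm_setIntegral_le_of_norm_le_const_ae hfin
      filter_upwards [ae_restrict_mem (hm n)] with x hx
      have h0n : (0:ℝ) ≤ (n : ℝ) * u := by positivity
      have hxm : x ∈ Set.Ici (0:ℝ) ∩ Set.Icc ((n : ℝ) * u) (((n : ℝ) + 1) * u) :=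
        ⟨le_trans h0n hx.1.le, hx.1.le, hx.2⟩
      have hbm : ((n : ℝ) + 1) * u ∈
          Set.Ici (0:ℝ) ∩ Set.Icc ((n : ℝ) * u) (((n : ℝ) + 1) * u) := by
        constructor
        · have : (0:ℝ) ≤ ((n : ℝ) + 1) * u := by positivity
          exact this
        · constructor
          · nlinarith
          · exact le_refl _
      have hed := eVariationOn.edist_le f hbm hxm
      have : dist (f (((n : ℝ) + 1) * u)) (f x) ≤ v n := by
        rw [dist_edist]
        exact ENNReal.toReal_mono (he_top n) hed
      rwa [Real.dist_eq] at this
    calc |∫ x in s n, (f (((n : ℝ) + 1) * u) - f x)|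
        = ‖∫ x in s n, (f (((n : ℝ) + 1) * u) - f x)‖ := rfl
    _ ≤ v n * (volume (s n)).toReal := hbound
    _ = v n * u := by rw [hvol, ENNReal.toReal_ofReal hu.le]
  -- assemble
  have ha : Summable (fun n : ℕ => u * f (((n : ℝ) + 1) * u)) := hsum.mul_left u
  have hIs : Summable (fun n => ∫ x in s n, f x) := hI.summable
  have hb : Summable (fun n : ℕ => u * f (((n : ℝ) + 1) * u) - ∫ x in s n, f x) := ha.sub hIs
  have htb : ∑' n : ℕ, (u * f (((n : ℝ) + 1) * u) - ∫ x in s n, f x)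
      = u * ∑' n : ℕ, f (((n : ℝ) + 1) * u) := by
    rw [Summable.tsum_sub ha hIs, tsum_mul_left, hI.tsum_eq, sub_zero]
  have habs : Summable (fun n : ℕ => |u * f (((n : ℝ) + 1) * u) - ∫ x in s n, f x|) := hb.abs
  have hchain : |u * ∑' n : ℕ, f (((n : ℝ) + 1) * u)|
      ≤ (eVariationOn f (Set.Ici 0)).toReal * u := by
    rw [← htb]
    calc |∑' n : ℕ, (u * f (((n : ℝ) + 1) * u) - ∫ x in s n, f x)|
        ≤ ∑' n : ℕ, |u * f (((n : ℝ) + 1) * u) - ∫ x in s n, f x| := by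
          have hnt := norm_tsum_le_tsum_norm
            (f := fun n : ℕ => u * f (((n : ℝ) + 1) * u) - ∫ x in s n, f x)
            (by simpa [Real.norm_eq_abs] using habs)
          simpa [Real.norm_eq_abs] using hnt
    _ ≤ ∑' n : ℕ, v n * u := Summable.tsum_le_tsum hbd habs (hvS.mul_right u)
    _ = (∑' n : ℕ, v n) * u := by rw [tsum_mul_right]
    _ ≤ (eVariationOn f (Set.Ici 0)).toReal * u :=
        mul_le_mul_of_nonneg_right hvt hu.le
  rw [abs_mul, abs_of_pos hu, mul_comm] at hchain
  exact le_of_mul_le_mul_right hchain hu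

/-- `E(f)(u) = u^{1/2} ∑_{n≥1} f(nu)` is well-defined pointwise, is
`O(u^{1/2})` as `u → 0`, and of rapid decay as `u → ∞`. -/
theorem stmt1 (f : ℝ → ℝ)
    (h0 : f 0 = 0)
    (hneg : ∀ x < (0:ℝ), f x = 0)
    (hBV : eVariationOn f (Set.Ici 0) ≠ ⊤)
    (hdecay : ∀ N : ℕ, ∃ C : ℝ, ∀ u : ℝ, 1 ≤ u → |f u| ≤ C / u ^ N)
    (hO2 : ∃ C : ℝ, ∀ u ∈ Set.Ioc (0:ℝ) 1, |f u| ≤ C * u ^ 2)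
    (hint : ∫ t in Set.Ioi (0:ℝ), f t = 0) :
    (∀ u : ℝ, 0 < u → Summable (fun n : ℕ => f (((n : ℝ) + 1) * u))) ∧
    (∃ C : ℝ, ∀ u ∈ Set.Ioc (0:ℝ) 1,
      |Real.sqrt u * ∑' n : ℕ, f (((n : ℝ) + 1) * u)| ≤ C * Real.sqrt u) ∧
    (∀ N : ℕ, ∃ C : ℝ, ∀ u : ℝ, 1 ≤ u →
      |Real.sqrt u * ∑' n : ℕ, f (((n : ℝ) + 1) * u)| ≤ C / u ^ N) := by
  obtain ⟨C2, hC2⟩ := hdecay 2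
  have hsum : ∀ u : ℝ, 0 < u → Summable (fun n : ℕ => f (((n : ℝ) + 1) * u)) :=
    fun u hu => aux_summable f C2 hC2 hu
  have hmeas := aux_meas f hneg hBV
  have hInt := aux_integrable f hmeas hdecay hO2
  refine ⟨hsum, ?_, ?_⟩
  · refine ⟨(eVariationOn f (Set.Ici 0)).toReal, ?_⟩
    intro u hu
    have hk := aux_key f hBV hInt hint hu.1 (hsum u hu.1)
    rw [abs_mul, abs_of_nonneg (Real.sqrt_nonneg u)]
    calc Real.sqrt u * |∑' n : ℕ, f (((n : ℝ) + 1) * u)|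
        ≤ Real.sqrt u * (eVariationOn f (Set.Ici 0)).toReal :=
          mul_le_mul_of_nonneg_left hk (Real.sqrt_nonneg u)
    _ = (eVariationOn f (Set.Ici 0)).toReal * Real.sqrt u := mul_comm _ _
  · intro N
    obtain ⟨C, hC⟩ := hdecay (N + 2)
    set K := ∑' n : ℕ, 1 / ((n : ℝ) + 1) ^ 2 with hK
    have hK0 : 0 ≤ K := tsum_nonneg (fun n => by positivity)
    refine ⟨|C| * K, ?_⟩
    intro u hu
    have hu0 : (0:ℝ) < u := lt_of_lt_of_le one_pos hu
    have hterm : ∀ n : ℕ, |f (((n : ℝ) + 1) * u)|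
        ≤ |C| / u ^ (N + 2) * (1 / ((n : ℝ) + 1) ^ 2) := by
      intro n
      have hn1 : (1:ℝ) ≤ (n : ℝ) + 1 := by
        have : (0:ℝ) ≤ (n : ℝ) := Nat.cast_nonneg n
        linarith
      have hx1 : (1:ℝ) ≤ ((n : ℝ) + 1) * u := one_le_mul_of_one_le_of_one_le hn1 hu
      have hxpos : (0:ℝ) < ((n : ℝ) + 1) * u := lt_of_lt_of_le one_pos hx1
      have hpows : ((n : ℝ) + 1) ^ 2 * u ^ (N + 2) ≤ (((n : ℝ) + 1) * u) ^ (N + 2) := by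
        rw [mul_pow]
        apply mul_le_mul_of_nonneg_right _ (by positivity)
        exact pow_le_pow_right₀ hn1 (by omega)
      calc |f (((n : ℝ) + 1) * u)| ≤ C / (((n : ℝ) + 1) * u) ^ (N + 2) := hC _ hx1
      _ ≤ |C| / (((n : ℝ) + 1) * u) ^ (N + 2) :=
          div_le_div_of_nonneg_right (le_abs_self C) (by positivity)
      _ ≤ |C| / (((n : ℝ) + 1) ^ 2 * u ^ (N + 2)) := by
          apply div_le_div_of_nonneg_left (abs_nonneg C) (by positivity) hpows
      _ = |C| / u ^ (N + 2) * (1 / ((n : ℝ) + 1) ^ 2) := by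
          rw [mul_one_div, div_div, mul_comm (u ^ (N + 2))]
    have habs : Summable (fun n : ℕ => |f (((n : ℝ) + 1) * u)|) := (hsum u hu0).abs
    have hbS : Summable (fun n : ℕ => |C| / u ^ (N + 2) * (1 / ((n : ℝ) + 1) ^ 2)) :=
      aux_shift_summable.mul_left _
    have hSb : |∑' n : ℕ, f (((n : ℝ) + 1) * u)| ≤ |C| / u ^ (N + 2) * K := by
      calc |∑' n : ℕ, f (((n : ℝ) + 1) * u)|
          ≤ ∑' n : ℕ, |f (((n : ℝ) + 1) * u)| := by
            have := norm_tsum_le_tsum_norm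
              (f := fun n : ℕ => f (((n : ℝ) + 1) * u))
              (by simpa [Real.norm_eq_abs] using habs)
            simpa [Real.norm_eq_abs] using this
      _ ≤ ∑' n : ℕ, |C| / u ^ (N + 2) * (1 / ((n : ℝ) + 1) ^ 2) :=
            Summable.tsum_le_tsum hterm habs hbS
      _ = |C| / u ^ (N + 2) * K := by rw [hK, tsum_mul_left]
    have hsq : Real.sqrt u ≤ u := by
      nlinarith [Real.sq_sqrt hu0.le, Real.sqrt_nonneg u, sq_nonneg (Real.sqrt u - 1)]
    rw [abs_mul, abs_of_nonneg (Real.sqrt_nonneg u)]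
    calc Real.sqrt u * |∑' n : ℕ, f (((n : ℝ) + 1) * u)|
        ≤ u * (|C| / u ^ (N + 2) * K) := by
          apply mul_le_mul hsq hSb (abs_nonneg _) (by linarith)
    _ = (|C| * K * u) / u ^ (N + 2) := by ring
    _ ≤ (|C| * K) / u ^ N := by
        rw [div_le_div_iff₀ (by positivity) (by positivity)]
        have hps : u ^ (N + 2) = u ^ N * u * u := by ring
        have hpN : (0:ℝ) < u ^ N := by positivity
        rw [hps]
        have hkey : 0 ≤ (|C| * K * u ^ N * u) * (u - 1) := by
          apply mul_nonneg _ (by linarith)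
          have := mul_nonneg (mul_nonneg (abs_nonneg C) hK0) hpN.le
          exact mul_nonneg this hu0.le
        nlinarith [hkey]
end

section
/- Let f be as above (bounded variation, rapid decay at ∞, O(u²) at 0, vanishing integral) and μ > 1. Then the series Σ_μ E(f)(u) := ∑_{k∈ℤ} E(f)(μ^k u) converges geometrically, uniformly on compact subsets of (0,∞), and defines a bounded measurable function on ℝ₊*/μ^ℤ. -/
open MeasureTheory Set

/-- The map `E(f)(u) = u^{1/2} ∑_{n≥1} f(nu)`. -/
noncomputable def Emap (f : ℝ → ℝ) (u : ℝ) : ℝ :=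
  Real.sqrt u * ∑' n : ℕ, f (((n : ℝ) + 1) * u)

/-- The periodization `Σ_μ g (u) = ∑_{k∈ℤ} g(μ^k u)`. -/
noncomputable def SigmaMu (μ : ℝ) (g : ℝ → ℝ) (u : ℝ) : ℝ :=
  ∑' k : ℤ, g (μ ^ k * u)

/-- A countable pointwise sum of measurable real functions, summable everywhere,
is measurable. -/
lemma measurable_tsum_real {ι : Type*} [Countable ι] {g : ι → ℝ → ℝ}
    (hg : ∀ i, Measurable (g i)) (hs : ∀ x, Summable fun i => g i x) :
    Measurable fun x => ∑' i, g i x := by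
  have hofr : ∀ a : ℝ, ENNReal.ofReal (max a 0) = ENNReal.ofReal a := by
    intro a
    rcases le_total a 0 with h | h
    · rw [max_eq_right h, ENNReal.ofReal_zero, eq_comm, ENNReal.ofReal_eq_zero]
      exact h
    · rw [max_eq_left h]
  have key : ∀ x, ∑' i, g i x
      = (∑' i, ENNReal.ofReal (g i x)).toReal - (∑' i, ENNReal.ofReal (-g i x)).toReal := by
    intro x
    have hsx := hs x
    have hp : Summable fun i => max (g i x) 0 :=
      Summable.of_nonneg_of_le (fun i => le_max_right _ _)
        (fun i => max_le (le_abs_self _) (abs_nonneg _)) hsx.abs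
    have hn : Summable fun i => max (-g i x) 0 :=
      Summable.of_nonneg_of_le (fun i => le_max_right _ _)
        (fun i => max_le (abs_neg (g i x) ▸ le_abs_self _) (abs_nonneg _)) hsx.abs
    have e1 : (∑' i, ENNReal.ofReal (g i x)).toReal = ∑' i, max (g i x) 0 := by
      rw [show (fun i => ENNReal.ofReal (g i x)) = fun i => ENNReal.ofReal (max (g i x) 0) by
            funext i; rw [hofr],
        ← ENNReal.ofReal_tsum_of_nonneg (fun i => le_max_right _ _) hp,
        ENNReal.toReal_ofReal (tsum_nonneg fun i => le_max_right _ _)]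
    have e2 : (∑' i, ENNReal.ofReal (-g i x)).toReal = ∑' i, max (-g i x) 0 := by
      rw [show (fun i => ENNReal.ofReal (-g i x)) = fun i => ENNReal.ofReal (max (-g i x) 0) by
            funext i; rw [hofr],
        ← ENNReal.ofReal_tsum_of_nonneg (fun i => le_max_right _ _) hn,
        ENNReal.toReal_ofReal (tsum_nonneg fun i => le_max_right _ _)]
    rw [e1, e2, ← Summable.tsum_sub hp hn]
    congr 1
    funext i
    exact (max_zero_sub_max_neg_zero_eq_self (g i x)).symm
  have heq : (fun x => ∑' i, g i x)
      = fun x => (∑' i, ENNReal.ofReal (g i x)).toReal - (∑' i, ENNReal.ofReal (-g i x)).toReal :=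
    funext key
  rw [heq]
  exact ((Measurable.ennreal_tsum fun i =>
      ENNReal.measurable_ofReal.comp (hg i)).ennreal_toReal).sub
    ((Measurable.ennreal_tsum fun i =>
      ENNReal.measurable_ofReal.comp (hg i).neg).ennreal_toReal)

/-- A function of bounded variation on `[0,∞)` vanishing on negatives is measurable. -/
lemma measurable_of_bv {f : ℝ → ℝ} (hneg : ∀ x < (0:ℝ), f x = 0)
    (hBV : eVariationOn f (Set.Ici 0) ≠ ⊤) : Measurable f := by
  obtain ⟨p, q, hp, hq, hf⟩ :=
    (BoundedVariationOn.locallyBoundedVariationOn hBV).exists_monotoneOn_sub_monotoneOn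
  have hmax : Monotone fun x : ℝ => max x 0 := fun a b h => max_le_max h le_rfl
  have hp' : Monotone fun x : ℝ => p (max x 0) :=
    fun a b h => hp (le_max_right a 0) (le_max_right b 0) (hmax h)
  have hq' : Monotone fun x : ℝ => q (max x 0) :=
    fun a b h => hq (le_max_right a 0) (le_max_right b 0) (hmax h)
  have key : f = (Set.Ici (0:ℝ)).indicator (fun x => p (max x 0) - q (max x 0)) := by
    funext x
    by_cases hx : (0:ℝ) ≤ x
    · rw [Set.indicator_apply, if_pos (show x ∈ Set.Ici (0:ℝ) from hx), max_eq_left hx, hf]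
      rfl
    · rw [Set.indicator_apply, if_neg (show x ∉ Set.Ici (0:ℝ) from hx),
        hneg x (lt_of_not_ge hx)]
  rw [key]
  exact (hp'.measurable.sub hq'.measurable).indicator measurableSet_Ici

/-- A function of bounded variation on `[0,∞)` vanishing at `0` and on negatives is bounded
by its total variation. -/
lemma bv_bound {f : ℝ → ℝ} (h0 : f 0 = 0) (hneg : ∀ x < (0:ℝ), f x = 0)
    (hBV : eVariationOn f (Set.Ici 0) ≠ ⊤) (x : ℝ) :
    |f x| ≤ (eVariationOn f (Set.Ici 0)).toReal := by
  rcases lt_or_ge x 0 with hx | hx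
  · rw [hneg x hx, abs_zero]
    exact ENNReal.toReal_nonneg
  · have h1 : |f x| = dist (f x) (f 0) := by rw [Real.dist_eq, h0, sub_zero]
    rw [h1, dist_edist]
    exact ENNReal.toReal_mono hBV (eVariationOn.edist_le f hx (le_refl (0:ℝ)))

/-- A bounded measurable function decaying quadratically is integrable on `(0,∞)`. -/
lemma f_integrable {f : ℝ → ℝ} {B C₂ : ℝ} (mf : Measurable f) (hbd : ∀ x, |f x| ≤ B)
    (hC : ∀ v : ℝ, 1 ≤ v → |f v| ≤ C₂ / v ^ 2) :
    IntegrableOn f (Set.Ioi 0) := by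
  have h1 : IntegrableOn f (Set.Ioc (0:ℝ) 1) := by
    have hB : IntegrableOn (fun _ : ℝ => B) (Set.Ioc (0:ℝ) 1) :=
      integrableOn_const measure_Ioc_lt_top.ne
    exact hB.mono' mf.aestronglyMeasurable
      (Filter.Eventually.of_forall fun x => by rw [Real.norm_eq_abs]; exact hbd x)
  have h2 : IntegrableOn f (Set.Ioi (1:ℝ)) := by
    have hg : IntegrableOn (fun t : ℝ => C₂ * t ^ (-2:ℝ)) (Set.Ioi (1:ℝ)) :=
      (integrableOn_Ioi_rpow_of_lt (by norm_num) one_pos).const_mul C₂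
    refine hg.mono' mf.aestronglyMeasurable ?_
    rw [ae_restrict_iff' measurableSet_Ioi]
    refine Filter.Eventually.of_forall fun t ht => ?_
    have ht1 : (1:ℝ) ≤ t := le_of_lt ht
    have ht0 : (0:ℝ) < t := lt_of_lt_of_le one_pos ht1
    have hrw : t ^ (-2:ℝ) = (t ^ 2)⁻¹ := by
      rw [show (-2:ℝ) = -((2:ℕ):ℝ) by norm_num, Real.rpow_neg ht0.le, Real.rpow_natCast]
    rw [Real.norm_eq_abs, hrw, ← div_eq_mul_inv]
    exact hC t ht1
  have hsplit : Set.Ioi (0:ℝ) = Set.Ioc 0 1 ∪ Set.Ioi 1 :=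
    (Set.Ioc_union_Ioi_eq_Ioi zero_le_one).symm
  rw [hsplit]
  exact h1.union h2

lemma summable_aux {u : ℝ} (hu : 0 < u) (C₂ : ℝ) :
    Summable fun n : ℕ => C₂ / u ^ 2 * (1 / ((n:ℝ) + 1) ^ 2) := by
  have h := (summable_nat_add_iff (f := fun n : ℕ => 1 / (n:ℝ) ^ 2) 1).2
    (Real.summable_one_div_nat_pow.2 one_lt_two)
  exact (h.congr (fun n => by push_cast; ring)).mul_left _

/-- The series defining `Emap f u` is summable for `u > 0`. -/
lemma summable_shift {f : ℝ → ℝ} {C₂ : ℝ}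
    (hC : ∀ v : ℝ, 1 ≤ v → |f v| ≤ C₂ / v ^ 2) {u : ℝ} (hu : 0 < u) :
    Summable fun n : ℕ => f (((n:ℝ) + 1) * u) := by
  apply Summable.of_norm_bounded_eventually_nat (summable_aux hu C₂)
  filter_upwards [Filter.eventually_ge_atTop ⌈1/u⌉₊] with n hn
  have h1 : (1:ℝ) ≤ ((n:ℝ) + 1) * u := by
    have h2 : (1:ℝ)/u ≤ (n:ℝ) + 1 := by
      have := Nat.le_ceil (1/u)
      have h3 : ((⌈1/u⌉₊ : ℕ) : ℝ) ≤ (n:ℝ) := Nat.cast_le.2 hn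
      linarith
    calc (1:ℝ) = (1/u) * u := by field_simp
    _ ≤ ((n:ℝ)+1) * u := mul_le_mul_of_nonneg_right h2 hu.le
  rw [Real.norm_eq_abs]
  calc |f (((n:ℝ)+1)*u)| ≤ C₂ / (((n:ℝ)+1)*u)^2 := hC _ h1
  _ = C₂/u^2 * (1/((n:ℝ)+1)^2) := by
      rw [mul_pow, div_mul_div_comm, mul_one, mul_comm]

/-- The key estimate: the Riemann-type sum `∑_{n≥1} f(nu)` is bounded by the total
variation of `f` on `[0,∞)`, using that `∫₀^∞ f = 0`. -/
lemma key_small {f : ℝ → ℝ} (hBV : eVariationOn f (Set.Ici 0) ≠ ⊤)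
    (hInt : IntegrableOn f (Set.Ioi 0)) (hint : ∫ t in Set.Ioi (0:ℝ), f t = 0)
    {u : ℝ} (hu : 0 < u) (hsum : Summable fun n : ℕ => f (((n:ℝ) + 1) * u)) :
    |∑' n : ℕ, f (((n:ℝ) + 1) * u)| ≤ (eVariationOn f (Set.Ici 0)).toReal := by
  set S : ℕ → Set ℝ := fun n => Set.Ioc ((n:ℝ) * u) (((n:ℝ) + 1) * u) with hS
  have hnn : ∀ n : ℕ, (0:ℝ) ≤ (n:ℝ) * u := fun n => mul_nonneg (Nat.cast_nonneg n) hu.le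
  have hlt : ∀ n : ℕ, (n:ℝ) * u < ((n:ℝ) + 1) * u := fun n => by nlinarith
  have hmeas : ∀ n, MeasurableSet (S n) := fun n => measurableSet_Ioc
  have hdisj : Pairwise (Function.onFun Disjoint S) := by
    have key : ∀ i j : ℕ, i < j → Disjoint (S i) (S j) := by
      intro i j hij
      apply Set.Ioc_disjoint_Ioc.2
      have h1 : ((i:ℝ) + 1) * u ≤ (j:ℝ) * u := by
        have : ((i:ℝ) + 1) ≤ (j:ℝ) := by exact_mod_cast hij
        exact mul_le_mul_of_nonneg_right this hu.le
      exact le_trans (min_le_left _ _) (le_trans h1 (le_max_right _ _))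
    intro i j hij
    rcases lt_or_gt_of_ne hij with h | h
    · exact key i j h
    · exact (key j i h).symm
  have hUnion : (⋃ n, S n) = Set.Ioi (0:ℝ) := by
    ext x
    simp only [hS, Set.mem_iUnion, Set.mem_Ioc, Set.mem_Ioi]
    constructor
    · rintro ⟨n, h1, _⟩
      exact lt_of_le_of_lt (hnn n) h1
    · intro hx
      have hm : 1 ≤ ⌈x/u⌉₊ := Nat.ceil_pos.2 (div_pos hx hu)
      refine ⟨⌈x/u⌉₊ - 1, ?_, ?_⟩
      · have h1 : ((⌈x/u⌉₊:ℝ) - 1) < x/u := by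
          have := Nat.ceil_lt_add_one (le_of_lt (div_pos hx hu))
          linarith
        have h2 : ((⌈x/u⌉₊ - 1 : ℕ):ℝ) = (⌈x/u⌉₊:ℝ) - 1 := by
          push_cast [Nat.cast_sub hm]
          ring
        rw [h2]
        exact (lt_div_iff₀ hu).1 h1
      · have h1 : x/u ≤ (⌈x/u⌉₊:ℝ) := Nat.le_ceil _
        have h2 : ((⌈x/u⌉₊ - 1 : ℕ):ℝ) + 1 = (⌈x/u⌉₊:ℝ) := by
          push_cast [Nat.cast_sub hm]
          ring
        rw [h2]
        exact (div_le_iff₀ hu).1 h1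
  have hInt' : IntegrableOn f (⋃ n, S n) := hUnion ▸ hInt
  have hHas : HasSum (fun n => ∫ t in S n, f t) 0 := by
    have := hasSum_integral_iUnion hmeas hdisj hInt'
    rwa [hUnion, hint] at this
  set Vn : ℕ → ENNReal :=
    fun n => eVariationOn f (Set.Ici 0 ∩ Set.Icc ((n:ℝ) * u) (((n:ℝ) + 1) * u)) with hVdef
  have hVn_ne : ∀ n, Vn n ≠ ⊤ :=
    fun n => ne_top_of_le_ne_top hBV (eVariationOn.mono f inter_subset_left)
  have hterm : ∀ n : ℕ, |u * f (((n:ℝ) + 1) * u) - ∫ t in S n, f t| ≤ u * (Vn n).toReal := by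
    intro n
    have hvol : volume (S n) = ENNReal.ofReal u := by
      rw [hS]
      simp only [Real.volume_Ioc]
      ring_nf
    have hconst : ∫ _ in S n, f (((n:ℝ) + 1) * u) = u * f (((n:ℝ) + 1) * u) := by
      rw [setIntegral_const, measureReal_def, hvol, ENNReal.toReal_ofReal hu.le, smul_eq_mul]
    have hfi : IntegrableOn f (S n) := by
      apply hInt.mono_set
      intro x hx
      exact lt_of_le_of_lt (hnn n) hx.1
    have hci : IntegrableOn (fun _ : ℝ => f (((n:ℝ) + 1) * u)) (S n) :=
      integrableOn_const measure_Ioc_lt_top.ne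
    rw [← hconst, ← integral_sub hci hfi]
    have hbd : ∀ x ∈ S n, ‖f (((n:ℝ) + 1) * u) - f x‖ ≤ (Vn n).toReal := by
      intro x hx
      have hmx : x ∈ Set.Ici (0:ℝ) ∩ Set.Icc ((n:ℝ) * u) (((n:ℝ) + 1) * u) :=
        ⟨le_trans (hnn n) hx.1.le, hx.1.le, hx.2⟩
      have hmc : ((n:ℝ) + 1) * u ∈ Set.Ici (0:ℝ) ∩ Set.Icc ((n:ℝ) * u) (((n:ℝ) + 1) * u) :=
        ⟨le_trans (hnn n) (hlt n).le, (hlt n).le, le_rfl⟩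
      rw [← dist_eq_norm, dist_edist]
      exact ENNReal.toReal_mono (hVn_ne n) (eVariationOn.edist_le f hmc hmx)
    have := norm_setIntegral_le_of_norm_le_const (by rw [hvol]; exact ENNReal.ofReal_lt_top)
      hbd
    rw [Real.norm_eq_abs, measureReal_def, hvol, ENNReal.toReal_ofReal hu.le] at this
    calc |∫ x in S n, (f (((n:ℝ) + 1) * u) - f x)| ≤ (Vn n).toReal * u := this
    _ = u * (Vn n).toReal := mul_comm _ _
  have hVsum : ∀ N : ℕ, ∑ n ∈ Finset.range N, Vn n
      = eVariationOn f (Set.Ici 0 ∩ Set.Icc 0 ((N:ℝ) * u)) := by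
    intro N
    induction N with
    | zero =>
      simp only [Finset.range_zero, Finset.sum_empty, Nat.cast_zero, zero_mul]
      rw [eq_comm]
      apply eVariationOn.subsingleton
      intro x hx y hy
      rw [Set.Icc_self] at hx hy
      rw [hx.2, hy.2]
    | succ N ih =>
      rw [Finset.sum_range_succ, ih, hVdef]
      have := eVariationOn.Icc_add_Icc f (s := Set.Ici (0:ℝ))
        (a := (0:ℝ)) (b := (N:ℝ) * u) (c := ((N:ℝ) + 1) * u)
        (hnn N) (hlt N).le (hnn N)
      rw [this]
      congr 2
      push_cast
      ring
  have hVreal : ∀ N : ℕ, ∑ n ∈ Finset.range N, (u * (Vn n).toReal)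
      ≤ u * (eVariationOn f (Set.Ici 0)).toReal := by
    intro N
    rw [← Finset.mul_sum]
    apply mul_le_mul_of_nonneg_left _ hu.le
    rw [← ENNReal.toReal_sum (fun n _ => hVn_ne n), hVsum N]
    exact ENNReal.toReal_mono hBV (eVariationOn.mono f inter_subset_left)
  have hsum2 : Summable fun n : ℕ => u * f (((n:ℝ) + 1) * u) := hsum.mul_left u
  have hsum3 : Summable fun n : ℕ => ∫ t in S n, f t := hHas.summable
  have hsumV : Summable fun n : ℕ => u * (Vn n).toReal :=
    summable_of_sum_range_le (fun n => mul_nonneg hu.le ENNReal.toReal_nonneg) hVreal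
  have habs : Summable fun n : ℕ => |u * f (((n:ℝ) + 1) * u) - ∫ t in S n, f t| :=
    Summable.of_nonneg_of_le (fun n => abs_nonneg _) hterm hsumV
  have hmain : |∑' n : ℕ, (u * f (((n:ℝ) + 1) * u) - ∫ t in S n, f t)|
      ≤ u * (eVariationOn f (Set.Ici 0)).toReal := by
    have h1 : ‖∑' n : ℕ, (u * f (((n:ℝ) + 1) * u) - ∫ t in S n, f t)‖
        ≤ ∑' n : ℕ, ‖u * f (((n:ℝ) + 1) * u) - ∫ t in S n, f t‖ :=
      norm_tsum_le_tsum_norm (by simpa only [Real.norm_eq_abs] using habs)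
    simp only [Real.norm_eq_abs] at h1
    refine le_trans h1 (le_trans (Summable.tsum_le_tsum hterm habs hsumV) ?_)
    exact Real.tsum_le_of_sum_range_le (fun n => mul_nonneg hu.le ENNReal.toReal_nonneg) hVreal
  rw [Summable.tsum_sub hsum2 hsum3, hHas.tsum_eq, sub_zero, tsum_mul_left, abs_mul,
    abs_of_pos hu] at hmain
  exact le_of_mul_le_mul_left hmain hu

/-- `|Emap f v|` is bounded by a constant times `min(√v, 1/√v)`. -/
lemma emap_bound {f : ℝ → ℝ} {C₂ V : ℝ}
    (hV : 0 ≤ V)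
    (hsmall : ∀ u : ℝ, 0 < u → |∑' n : ℕ, f (((n:ℝ) + 1) * u)| ≤ V)
    (hC : ∀ v : ℝ, 1 ≤ v → |f v| ≤ C₂ / v ^ 2) :
    ∃ A : ℝ, 0 ≤ A ∧ ∀ v : ℝ, 0 < v →
      |Emap f v| ≤ A * min (Real.sqrt v) (Real.sqrt v)⁻¹ := by
  have hC0 : 0 ≤ C₂ := by
    have := hC 1 le_rfl
    simp only [one_pow, div_one] at this
    exact le_trans (abs_nonneg _) this
  set K : ℝ := ∑' n : ℕ, 1 / ((n:ℝ) + 1) ^ 2 with hK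
  have hK0 : 0 ≤ K := tsum_nonneg fun n => by positivity
  refine ⟨max V (C₂ * K), le_trans hV (le_max_left _ _), fun v hv => ?_⟩
  have hsq : 0 < Real.sqrt v := Real.sqrt_pos.2 hv
  have habs : |Emap f v| = Real.sqrt v * |∑' n : ℕ, f (((n:ℝ) + 1) * v)| := by
    rw [Emap, abs_mul, abs_of_nonneg (Real.sqrt_nonneg v)]
  rcases le_or_gt v 1 with hv1 | hv1
  · have hmin : min (Real.sqrt v) (Real.sqrt v)⁻¹ = Real.sqrt v := by
      apply min_eq_left
      have h1 : Real.sqrt v ≤ 1 := by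
        rw [show (1:ℝ) = Real.sqrt 1 by rw [Real.sqrt_one]]
        exact Real.sqrt_le_sqrt hv1
      have h2 : (1:ℝ) ≤ (Real.sqrt v)⁻¹ := (one_le_inv₀ hsq).mpr h1
      linarith
    rw [hmin, habs, mul_comm]
    apply mul_le_mul_of_nonneg_right _ (Real.sqrt_nonneg v)
    exact le_trans (hsmall v hv) (le_max_left _ _)
  · have hvpos : (0:ℝ) < v := hv
    have hterm : ∀ n : ℕ, |f (((n:ℝ) + 1) * v)| ≤ C₂ / v ^ 2 * (1 / ((n:ℝ) + 1) ^ 2) := by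
      intro n
      have hn1 : (1:ℝ) ≤ (n:ℝ) + 1 := by
        have : (0:ℝ) ≤ (n:ℝ) := Nat.cast_nonneg n
        linarith
      have h1 : (1:ℝ) ≤ ((n:ℝ) + 1) * v := by nlinarith
      calc |f (((n:ℝ) + 1) * v)| ≤ C₂ / (((n:ℝ) + 1) * v) ^ 2 := hC _ h1
      _ = C₂ / v ^ 2 * (1 / ((n:ℝ) + 1) ^ 2) := by
          rw [mul_pow, div_mul_div_comm, mul_one, mul_comm]
    have hsumb := summable_aux hvpos C₂
    have habs2 : Summable fun n : ℕ => |f (((n:ℝ) + 1) * v)| :=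
      Summable.of_nonneg_of_le (fun n => abs_nonneg _) hterm hsumb
    have hT : |∑' n : ℕ, f (((n:ℝ) + 1) * v)| ≤ C₂ / v ^ 2 * K := by
      have h1 : ‖∑' n : ℕ, f (((n:ℝ) + 1) * v)‖ ≤ ∑' n : ℕ, ‖f (((n:ℝ) + 1) * v)‖ :=
        norm_tsum_le_tsum_norm (by simpa only [Real.norm_eq_abs] using habs2)
      simp only [Real.norm_eq_abs] at h1
      refine le_trans h1 (le_trans (Summable.tsum_le_tsum hterm habs2 hsumb) ?_)
      rw [hK, tsum_mul_left]
    have hmin : min (Real.sqrt v) (Real.sqrt v)⁻¹ = (Real.sqrt v)⁻¹ := by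
      apply min_eq_right
      have h1 : (1:ℝ) ≤ Real.sqrt v := by
        rw [show (1:ℝ) = Real.sqrt 1 by rw [Real.sqrt_one]]
        exact Real.sqrt_le_sqrt hv1.le
      have h2 : (Real.sqrt v)⁻¹ ≤ 1 := inv_le_one_of_one_le₀ h1
      linarith
    rw [hmin, habs]
    have step1 : Real.sqrt v * |∑' n : ℕ, f (((n:ℝ) + 1) * v)|
        ≤ Real.sqrt v * (C₂ / v ^ 2 * K) :=
      mul_le_mul_of_nonneg_left hT (Real.sqrt_nonneg v)
    have step2 : Real.sqrt v * (C₂ / v ^ 2 * K) ≤ (C₂ * K) * (Real.sqrt v)⁻¹ := by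
      have hs0 : (0:ℝ) < Real.sqrt v := hsq
      have hs0' : Real.sqrt v ≠ 0 := ne_of_gt hs0
      have hinv : (Real.sqrt v)⁻¹ = Real.sqrt v / v := by
        rw [eq_div_iff (ne_of_gt hv)]
        nth_rewrite 2 [← Real.mul_self_sqrt hv.le]
        rw [← mul_assoc, inv_mul_cancel₀ hs0', one_mul]
      have e1 : Real.sqrt v * (C₂ / v ^ 2 * K) = C₂ * K * Real.sqrt v / v ^ 2 := by ring
      have e2 : (C₂ * K) * (Real.sqrt v)⁻¹ = C₂ * K * Real.sqrt v / v := by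
        rw [hinv]; ring
      rw [e1, e2]
      exact div_le_div_of_nonneg_left (by positivity) hv (by nlinarith)
    refine le_trans step1 (le_trans step2 ?_)
    apply mul_le_mul_of_nonneg_right (le_max_right _ _) (by positivity)

lemma sqrt_zpow' {μ : ℝ} (hμ : 0 < μ) (k : ℤ) : Real.sqrt (μ ^ k) = Real.sqrt μ ^ k := by
  calc Real.sqrt (μ ^ k) = (μ ^ (k:ℝ)) ^ ((1:ℝ)/2) := by
        rw [Real.sqrt_eq_rpow, Real.rpow_intCast]
  _ = μ ^ ((k:ℝ) * ((1:ℝ)/2)) := (Real.rpow_mul hμ.le _ _).symm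
  _ = μ ^ (((1:ℝ)/2) * (k:ℝ)) := by rw [mul_comm]
  _ = (μ ^ ((1:ℝ)/2)) ^ (k:ℝ) := Real.rpow_mul hμ.le _ _
  _ = Real.sqrt μ ^ (k:ℝ) := by rw [Real.sqrt_eq_rpow]
  _ = Real.sqrt μ ^ k := Real.rpow_intCast _ k

lemma summable_geom_int {r : ℝ} (h0 : 0 ≤ r) (h1 : r < 1) :
    Summable fun k : ℤ => r ^ k.natAbs := by
  apply Summable.of_nat_of_neg_add_one
  · exact (summable_geometric_of_lt_one h0 h1).congr (fun n => by simp)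
  · refine ((summable_geometric_of_lt_one h0 h1).mul_left r).congr (fun n => ?_)
    have : ((-((n:ℤ) + 1)).natAbs) = n + 1 := by
      rw [Int.natAbs_neg]
      exact_mod_cast Int.natAbs_natCast (n+1)
    rw [this, pow_succ, mul_comm]

/-- The geometric, uniform-on-compacts bound for `Emap f (μ^k u)`. -/
lemma emap_geom {f : ℝ → ℝ} {A μ : ℝ} (hA : 0 ≤ A) (hμ : 1 < μ)
    (hb : ∀ v : ℝ, 0 < v → |Emap f v| ≤ A * min (Real.sqrt v) (Real.sqrt v)⁻¹)
    {a b : ℝ} (ha : 0 < a) :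
    ∀ u ∈ Set.Icc a b, ∀ k : ℤ,
      |Emap f (μ ^ k * u)| ≤
        (A * max (Real.sqrt a)⁻¹ (Real.sqrt (max b 1))) * ((Real.sqrt μ)⁻¹) ^ k.natAbs := by
  intro u hu k
  have hμ0 : (0:ℝ) < μ := lt_trans one_pos hμ
  have hs1 : (1:ℝ) < Real.sqrt μ := (Real.lt_sqrt zero_le_one).2 (by rwa [one_pow])
  set s := Real.sqrt μ with hs
  have hs0 : (0:ℝ) < s := lt_trans one_pos hs1
  have hu0 : 0 < u := lt_of_lt_of_le ha hu.1
  have hzk : (0:ℝ) < μ ^ k := zpow_pos hμ0 k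
  have hv0 : 0 < μ ^ k * u := mul_pos hzk hu0
  have hsqv : Real.sqrt (μ ^ k * u) = s ^ k * Real.sqrt u := by
    rw [Real.sqrt_mul (le_of_lt hzk), sqrt_zpow' hμ0]
  have hbound := hb _ hv0
  have hsa : 0 < Real.sqrt a := Real.sqrt_pos.2 ha
  have hsu : Real.sqrt a ≤ Real.sqrt u := Real.sqrt_le_sqrt hu.1
  have hub : Real.sqrt u ≤ Real.sqrt (max b 1) := Real.sqrt_le_sqrt (le_max_of_le_left hu.2)
  rcases le_or_gt 0 k with hk | hk
  · have hnat : (s⁻¹) ^ k.natAbs = (s ^ k)⁻¹ := by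
      rw [inv_pow, ← zpow_natCast s k.natAbs, Int.natAbs_of_nonneg hk]
    have h1 : min (Real.sqrt (μ^k*u)) (Real.sqrt (μ^k*u))⁻¹ ≤ (s ^ k)⁻¹ * (Real.sqrt a)⁻¹ := by
      refine le_trans (min_le_right _ _) ?_
      rw [hsqv, mul_inv]
      apply mul_le_mul_of_nonneg_left _ (inv_nonneg.2 (zpow_nonneg hs0.le k))
      exact inv_anti₀ hsa hsu
    calc |Emap f (μ^k*u)| ≤ A * ((s ^ k)⁻¹ * (Real.sqrt a)⁻¹) :=
          le_trans hbound (mul_le_mul_of_nonneg_left h1 hA)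
    _ = (A * (Real.sqrt a)⁻¹) * (s⁻¹) ^ k.natAbs := by rw [hnat]; ring
    _ ≤ (A * max (Real.sqrt a)⁻¹ (Real.sqrt (max b 1))) * (s⁻¹) ^ k.natAbs := by
        apply mul_le_mul_of_nonneg_right _ (by positivity)
        exact mul_le_mul_of_nonneg_left (le_max_left _ _) hA
  · have hnat : (s⁻¹) ^ k.natAbs = s ^ k := by
      rw [inv_pow, ← zpow_natCast s k.natAbs, Int.ofNat_natAbs_of_nonpos (le_of_lt hk),
        zpow_neg, inv_inv]
    have h1 : min (Real.sqrt (μ^k*u)) (Real.sqrt (μ^k*u))⁻¹ ≤ s ^ k * Real.sqrt (max b 1) := by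
      refine le_trans (min_le_left _ _) ?_
      rw [hsqv]
      exact mul_le_mul_of_nonneg_left hub (zpow_nonneg hs0.le k)
    calc |Emap f (μ^k*u)| ≤ A * (s ^ k * Real.sqrt (max b 1)) :=
          le_trans hbound (mul_le_mul_of_nonneg_left h1 hA)
    _ = (A * Real.sqrt (max b 1)) * (s⁻¹) ^ k.natAbs := by rw [hnat]; ring
    _ ≤ (A * max (Real.sqrt a)⁻¹ (Real.sqrt (max b 1))) * (s⁻¹) ^ k.natAbs := by
        apply mul_le_mul_of_nonneg_right _ (by positivity)
        exact mul_le_mul_of_nonneg_left (le_max_right _ _) hA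

/-- `SigmaMu` is invariant under multiplication by integer powers of `μ`. -/
lemma sigma_shift {g : ℝ → ℝ} {μ : ℝ} (hμ0 : μ ≠ 0) (m : ℤ) (u : ℝ) :
    SigmaMu μ g (μ ^ m * u) = SigmaMu μ g u := by
  unfold SigmaMu
  have h := (Equiv.addRight m).tsum_eq (fun k : ℤ => g (μ ^ k * u))
  rw [← h]
  apply tsum_congr
  intro k
  simp only [Equiv.coe_addRight]
  rw [zpow_add₀ hμ0, mul_assoc]

/-- the series `Σ_μ E(f)(u) = ∑_{k∈ℤ} E(f)(μ^k u)` converges geometrically,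
uniformly on compact subsets of `(0,∞)`, and defines a bounded measurable function on
`ℝ₊*/μ^ℤ` (i.e. a bounded measurable function on `(0,∞)` invariant under `u ↦ μu`). -/
theorem stmt2 (f : ℝ → ℝ)
    (h0 : f 0 = 0)
    (hneg : ∀ x < (0:ℝ), f x = 0)
    (hBV : eVariationOn f (Set.Ici 0) ≠ ⊤)
    (hdecay : ∀ N : ℕ, ∃ C : ℝ, ∀ u : ℝ, 1 ≤ u → |f u| ≤ C / u ^ N)
    (hO2 : ∃ C : ℝ, ∀ u ∈ Set.Ioc (0:ℝ) 1, |f u| ≤ C * u ^ 2)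
    (hint : ∫ t in Set.Ioi (0:ℝ), f t = 0)
    (μ : ℝ) (hμ : 1 < μ) :
    (∀ u : ℝ, 0 < u → Summable (fun k : ℤ => Emap f (μ ^ k * u))) ∧
    (∀ a b : ℝ, 0 < a → ∃ C : ℝ, ∃ r : ℝ, 0 < r ∧ r < 1 ∧
      ∀ u ∈ Set.Icc a b, ∀ k : ℤ, |Emap f (μ ^ k * u)| ≤ C * r ^ k.natAbs) ∧
    (∃ M : ℝ, ∀ u : ℝ, 0 < u → |SigmaMu μ (Emap f) u| ≤ M) ∧
    (∀ u : ℝ, 0 < u → SigmaMu μ (Emap f) (μ * u) = SigmaMu μ (Emap f) u) ∧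
    Measurable (SigmaMu μ (Emap f)) := by
  obtain ⟨C₂, hC₂⟩ := hdecay 2
  have hμ0 : (0:ℝ) < μ := lt_trans one_pos hμ
  have hμ0' : μ ≠ 0 := ne_of_gt hμ0
  have hbd := bv_bound h0 hneg hBV
  have mf : Measurable f := measurable_of_bv hneg hBV
  have hInt : IntegrableOn f (Set.Ioi 0) := f_integrable mf hbd hC₂
  have hsum : ∀ u : ℝ, 0 < u → Summable fun n : ℕ => f (((n:ℝ) + 1) * u) :=
    fun u hu => summable_shift hC₂ hu
  have hsmall : ∀ u : ℝ, 0 < u → |∑' n : ℕ, f (((n:ℝ) + 1) * u)|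
      ≤ (eVariationOn f (Set.Ici 0)).toReal :=
    fun u hu => key_small hBV hInt hint hu (hsum u hu)
  obtain ⟨A, hA0, hAb⟩ := emap_bound ENNReal.toReal_nonneg hsmall hC₂
  have hs1 : (1:ℝ) < Real.sqrt μ := (Real.lt_sqrt zero_le_one).2 (by rwa [one_pow])
  set r : ℝ := (Real.sqrt μ)⁻¹ with hrdef
  have hr0 : 0 < r := inv_pos.2 (lt_trans one_pos hs1)
  have hr1 : r < 1 := inv_lt_one_of_one_lt₀ hs1
  have hrs : Summable fun k : ℤ => r ^ k.natAbs := summable_geom_int hr0.le hr1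
  have claim1 : ∀ u : ℝ, 0 < u → Summable fun k : ℤ => Emap f (μ ^ k * u) := by
    intro u hu
    apply Summable.of_norm_bounded
      (hrs.mul_left (A * max (Real.sqrt u)⁻¹ (Real.sqrt (max u 1))))
    intro k
    rw [Real.norm_eq_abs]
    exact emap_geom hA0 hμ hAb hu u ⟨le_rfl, le_rfl⟩ k
  have hallsumE : ∀ u : ℝ, Summable fun k : ℤ => Emap f (μ ^ k * u) := by
    intro u
    rcases lt_or_ge 0 u with hu | hu
    · exact claim1 u hu
    · have hz : ∀ k : ℤ, Emap f (μ ^ k * u) = 0 := by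
        intro k
        have hv : μ ^ k * u ≤ 0 := mul_nonpos_of_nonneg_of_nonpos (zpow_pos hμ0 k).le hu
        rw [Emap, Real.sqrt_eq_zero'.2 hv, zero_mul]
      exact summable_zero.congr fun k => (hz k).symm
  refine ⟨claim1, ?_, ?_, ?_, ?_⟩
  · -- geometric bound, uniform on compacts
    intro a b ha
    exact ⟨A * max (Real.sqrt a)⁻¹ (Real.sqrt (max b 1)), r, hr0, hr1,
      fun u hu k => emap_geom hA0 hμ hAb ha u hu k⟩
  · -- boundedness
    refine ⟨∑' k : ℤ, (A * max (Real.sqrt 1)⁻¹ (Real.sqrt (max μ 1))) * r ^ k.natAbs, ?_⟩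
    intro u hu
    set m : ℤ := ⌊Real.logb μ u⌋ with hm
    set u₀ : ℝ := μ ^ (-m) * u with hu₀
    have hmu : (μ:ℝ) ^ m ≤ u := by
      have h := Real.rpow_le_rpow_of_exponent_le hμ.le (Int.floor_le (Real.logb μ u))
      rwa [Real.rpow_logb hμ0 (ne_of_gt hμ) hu, Real.rpow_intCast] at h
    have hum : u < μ ^ (m + 1) := by
      have h := Real.rpow_lt_rpow_of_exponent_lt hμ (Int.lt_floor_add_one (Real.logb μ u))
      rw [Real.rpow_logb hμ0 (ne_of_gt hμ) hu] at h
      have h2 : ((m:ℝ) + 1) = ((m + 1 : ℤ) : ℝ) := by push_cast; ring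
      rwa [h2, Real.rpow_intCast] at h
    have hneg_pos : (0:ℝ) < μ ^ (-m) := zpow_pos hμ0 _
    have hu₀1 : 1 ≤ u₀ := by
      have h := mul_le_mul_of_nonneg_left hmu hneg_pos.le
      rwa [← zpow_add₀ hμ0', neg_add_cancel, zpow_zero] at h
    have hu₀μ : u₀ ≤ μ := by
      have h := mul_le_mul_of_nonneg_left hum.le hneg_pos.le
      rwa [← zpow_add₀ hμ0', show -m + (m + 1) = 1 by ring, zpow_one] at h
    have hu₀pos : 0 < u₀ := lt_of_lt_of_le one_pos hu₀1
    have hrepr : SigmaMu μ (Emap f) u = SigmaMu μ (Emap f) u₀ := by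
      have he : μ ^ m * u₀ = u := by
        rw [hu₀, ← mul_assoc, ← zpow_add₀ hμ0', add_neg_cancel, zpow_zero, one_mul]
      calc SigmaMu μ (Emap f) u = SigmaMu μ (Emap f) (μ ^ m * u₀) := by rw [he]
      _ = SigmaMu μ (Emap f) u₀ := sigma_shift hμ0' m u₀
    have hbnd := emap_geom hA0 hμ hAb one_pos u₀ ⟨hu₀1, hu₀μ⟩
    have hsumE := claim1 u₀ hu₀pos
    have habs : Summable fun k : ℤ => |Emap f (μ ^ k * u₀)| := hsumE.abs
    rw [hrepr]
    have h1 : |SigmaMu μ (Emap f) u₀| ≤ ∑' k : ℤ, |Emap f (μ ^ k * u₀)| := by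
      rw [SigmaMu]
      simpa only [Real.norm_eq_abs] using
        norm_tsum_le_tsum_norm (f := fun k : ℤ => Emap f (μ ^ k * u₀))
          (by simpa only [Real.norm_eq_abs] using habs)
    exact le_trans h1 (Summable.tsum_le_tsum (fun k => hbnd k) habs
      (hrs.mul_left (A * max (Real.sqrt 1)⁻¹ (Real.sqrt (max μ 1)))))
  · -- invariance
    intro u _
    have h := sigma_shift (g := Emap f) hμ0' 1 u
    rwa [zpow_one] at h
  · -- measurability
    have hsums : ∀ u : ℝ, Summable fun n : ℕ => f (((n:ℝ) + 1) * u) := by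
      intro u
      rcases lt_trichotomy u 0 with hu | hu | hu
      · have hz : ∀ n : ℕ, f (((n:ℝ) + 1) * u) = 0 := fun n =>
          hneg _ (mul_neg_of_pos_of_neg (by positivity) hu)
        exact summable_zero.congr fun n => (hz n).symm
      · subst hu
        have hz : ∀ n : ℕ, f (((n:ℝ) + 1) * 0) = 0 := fun n => by rw [mul_zero, h0]
        exact summable_zero.congr fun n => (hz n).symm
      · exact hsum u hu
    have hEm : Measurable (Emap f) := by
      have : Measurable fun u : ℝ => Real.sqrt u * ∑' n : ℕ, f (((n:ℝ) + 1) * u) :=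
        Real.continuous_sqrt.measurable.mul
          (measurable_tsum_real (fun n => mf.comp (measurable_const_mul _)) hsums)
      exact this
    exact measurable_tsum_real (fun k => hEm.comp (measurable_const_mul _)) hallsumE
end

section
/- For f ∈ S₀^ev (even Schwartz, f(0)=0, ∫f=0), the Poisson summation formula implies E(f̂)(x) = E(f)(x^{-1}) for all x > 0, where f̂ is the Fourier transform of f and E(f)(u) = u^{1/2}∑_{n≥1}f(nu). -/
open MeasureTheory Set

open FourierTransform

lemma my_fourier_dilate (g : ℝ → ℂ) (a : ℝ) (ha : 0 < a) (ξ : ℝ) :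
    𝓕 (fun t : ℝ => g (a⁻¹ * t)) ξ
      = (a : ℂ) * 𝓕 g (a * ξ) := by
  rw [Real.fourier_real_eq, Real.fourier_real_eq]
  have h : ∀ v : ℝ, 𝐞 (-(v * ξ)) • g (a⁻¹ * v)
      = (fun s : ℝ => 𝐞 (-(s * (a * ξ))) • g s) (a⁻¹ * v) := by
    intro v
    have h2 : a⁻¹ * v * (a * ξ) = v * ξ := by field_simp
    simp only [h2]
  simp_rw [h]
  rw [MeasureTheory.Measure.integral_comp_inv_mul_left (fun s : ℝ => 𝐞 (-(s * (a * ξ))) • g s) a,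
    abs_of_pos ha, Complex.real_smul]

lemma my_fourier_even {g : ℝ → ℂ} (hg : ∀ t, g (-t) = g t) (ξ : ℝ) :
    𝓕 g (-ξ) = 𝓕 g ξ := by
  rw [Real.fourier_real_eq, Real.fourier_real_eq]
  rw [← MeasureTheory.integral_neg_eq_self (fun v : ℝ => 𝐞 (-(v * ξ)) • g v) volume]
  congr 1
  funext v
  rw [hg]
  congr 2
  ring

lemma my_tsum_int_even_zero {h : ℤ → ℂ} (hsum : Summable h) (heven : ∀ n : ℤ, h (-n) = h n)
    (h0 : h 0 = 0) : ∑' n : ℤ, h n = 2 * ∑' n : ℕ, h ((n : ℤ) + 1) := by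
  have h1 : Summable fun n : ℕ => h n := hsum.comp_injective Nat.cast_injective
  have h2 : Summable fun n : ℕ => h (-((n : ℤ) + 1)) :=
    hsum.comp_injective (fun a b hab => by simpa using hab)
  rw [tsum_of_nat_of_neg_add_one h1 h2]
  have e1 : ∑' n : ℕ, h (-((n : ℤ) + 1)) = ∑' n : ℕ, h ((n : ℤ) + 1) :=
    tsum_congr fun n => heven _
  have e2 : ∑' n : ℕ, h n = ∑' n : ℕ, h ((n : ℤ) + 1) := by
    rw [Summable.tsum_eq_zero_add h1]
    simp only [Nat.cast_zero, h0, zero_add]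
    exact tsum_congr fun n => by push_cast; ring_nf
  rw [e1, e2]; ring


/-- The space `S₀^ev` of even real Schwartz functions with `f(0) = 0` and `∫ f = 0`. -/
def S0ev : Set (SchwartzMap ℝ ℝ) :=
  {f | (∀ x, f (-x) = f x) ∧ f 0 = 0 ∧ (∫ x : ℝ, f x) = 0}

/-- Poisson summation gives `E(f̂)(x) = E(f)(x⁻¹)` for `x > 0`, where
`f̂` is the Fourier transform and `E(f)(u) = u^{1/2} ∑_{n≥1} f(nu)`. -/
theorem stmt4 (f : SchwartzMap ℝ ℝ) (hf : f ∈ S0ev) (x : ℝ) (hx : 0 < x) :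
    (Real.sqrt x : ℂ) * ∑' n : ℕ,
        FourierTransform.fourier (fun t : ℝ => (f t : ℂ)) (((n : ℝ) + 1) * x) =
      (Real.sqrt x⁻¹ : ℂ) * ∑' n : ℕ, (f (((n : ℝ) + 1) * x⁻¹) : ℂ) := by
  obtain ⟨hev, hf0, hfint⟩ := hf
  have hxinv : (x:ℝ)⁻¹ ≠ 0 := inv_ne_zero hx.ne'
  let F : SchwartzMap ℝ ℂ := SchwartzMap.bilinLeftCLM (ContinuousLinearMap.lsmul ℝ ℝ)
      (Function.HasTemperateGrowth.const (1 : ℂ)) f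
  have hFapp : ∀ t : ℝ, F t = (f t : ℂ) := by
    intro t
    show (ContinuousLinearMap.lsmul ℝ ℝ) (f t) (1 : ℂ) = (f t : ℂ)
    simp [Complex.real_smul]
  have hFfun : ⇑F = fun t : ℝ => (f t : ℂ) := funext hFapp
  let e : ℝ ≃L[ℝ] ℝ := (LinearEquiv.smulOfNeZero ℝ ℝ x⁻¹ hxinv).toContinuousLinearEquiv
  let G : SchwartzMap ℝ ℂ := SchwartzMap.compCLMOfContinuousLinearEquiv ℝ e F
  have hGapp : ∀ t : ℝ, G t = (f (x⁻¹ * t) : ℂ) := by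
    intro t
    show F (e t) = _
    have he : e t = x⁻¹ * t := by
      simp [e, LinearEquiv.coe_toContinuousLinearEquiv, smul_eq_mul]
    rw [he, hFapp]
  have hGfun : ⇑G = fun t : ℝ => F (x⁻¹ * t) := by
    funext t; rw [hGapp, hFapp]
  -- Fourier transform of G
  have hFG : ∀ ξ : ℝ, 𝓕 (⇑G) ξ = (x:ℂ) * 𝓕 (⇑F) (x * ξ) := by
    intro ξ; rw [hGfun]; exact my_fourier_dilate F x hx ξ
  -- Poisson summation
  have hP := SchwartzMap.tsum_eq_tsum_fourier G 0
  simp only [zero_add, QuotientAddGroup.mk_zero, fourier_eval_zero, mul_one,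
    SchwartzMap.fourierTransformCLM_apply, SchwartzMap.fourier_coe] at hP
  -- summability
  have hGsum : Summable fun n : ℤ => G (n:ℝ) :=
    summable_of_isBigO (Real.summable_abs_int_rpow one_lt_two)
      ((G.isBigO_cocompact_rpow (-2)).comp_tendsto Int.tendsto_coe_cofinite)
  have hFGsum : Summable fun n : ℤ => 𝓕 (⇑G) (n:ℝ) := by
    have := summable_of_isBigO (Real.summable_abs_int_rpow one_lt_two)
      (((SchwartzMap.fourierTransformCLM ℝ G).isBigO_cocompact_rpow (-2)).comp_tendsto
        Int.tendsto_coe_cofinite)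
    simp only [SchwartzMap.fourierTransformCLM_apply, SchwartzMap.fourier_coe] at this
    exact this
  -- evenness and vanishing at 0
  have hGeven : ∀ n : ℤ, G (((-n : ℤ)):ℝ) = G ((n : ℤ):ℝ) := by
    intro n
    push_cast
    rw [hGapp, hGapp, mul_neg, hev]
  have hGz : G ((0:ℤ):ℝ) = 0 := by
    rw [Int.cast_zero, hGapp, mul_zero, hf0, Complex.ofReal_zero]
  have hFeven : ∀ t : ℝ, F (-t) = F t := fun t => by rw [hFapp, hFapp, hev]
  have hFzero : 𝓕 (⇑F) 0 = 0 := by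
    rw [Real.fourier_real_eq]
    have h1 : ∀ v : ℝ, 𝐞 (-(v * (0:ℝ))) • F v = F v := by
      intro v; simp
    simp_rw [h1, hFfun]
    have h2 : ∫ v : ℝ, ((f v : ℝ) : ℂ) = ((∫ v : ℝ, f v : ℝ) : ℂ) := integral_ofReal
    rw [h2, hfint, Complex.ofReal_zero]
  have hFGeven : ∀ n : ℤ, 𝓕 (⇑G) (((-n : ℤ)):ℝ) = 𝓕 (⇑G) ((n:ℤ):ℝ) := by
    intro n
    push_cast
    rw [hFG, hFG, mul_neg, my_fourier_even hFeven]
  have hFGz : 𝓕 (⇑G) ((0:ℤ):ℝ) = 0 := by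
    rw [Int.cast_zero, hFG, mul_zero, hFzero, mul_zero]
  rw [my_tsum_int_even_zero hGsum hGeven hGz,
    my_tsum_int_even_zero hFGsum hFGeven hFGz] at hP
  have hL : ∑' n : ℕ, G (((n:ℤ) + 1 : ℤ):ℝ) = ∑' n : ℕ, (f (((n:ℝ) + 1) * x⁻¹) : ℂ) := by
    refine tsum_congr fun n => ?_
    push_cast
    rw [hGapp, mul_comm]
  have hR : ∑' n : ℕ, 𝓕 (⇑G) (((n:ℤ) + 1 : ℤ):ℝ)
      = (x:ℂ) * ∑' n : ℕ, 𝓕 (fun t : ℝ => (f t : ℂ)) (((n:ℝ) + 1) * x) := by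
    rw [← tsum_mul_left]
    refine tsum_congr fun n => ?_
    push_cast
    rw [hFG, hFfun, mul_comm x ((n:ℝ) + 1)]
  rw [hL, hR] at hP
  have key : (∑' n : ℕ, (f (((n:ℝ) + 1) * x⁻¹) : ℂ))
      = (x:ℂ) * ∑' n : ℕ, 𝓕 (fun t : ℝ => (f t : ℂ)) (((n:ℝ) + 1) * x) :=
    mul_left_cancel₀ two_ne_zero hP
  rw [key]
  have hs : (Real.sqrt x : ℂ) = (Real.sqrt x⁻¹ : ℂ) * x := by
    norm_cast
    rw [Real.sqrt_inv, inv_mul_eq_div, Real.div_sqrt]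
  rw [hs]; ring
end

section
/- Let f ∈ S₀^ev and define ψ(z) = ∫₀^∞ f(u) u^{1/2 - iz} d*u (with d*u = du/u). Then for z ∈ ℂ with Im(z) > 1/2, one has ∫₀^∞ E(f)(u) u^{-iz} d*u = ζ(1/2 - iz)·ψ(z), where ζ is the Riemann zeta function and E(f)(u) = u^{1/2}∑_{n≥1} f(nu). -/
open MeasureTheory Set Complex

/-- Substitution `u ↦ b * u` in a Mellin-type real integral. -/
lemma aux_subst (φ : ℝ → ℝ) {b : ℝ} (c : ℝ) (hb : 0 < b) :
    ∫ u in Set.Ioi (0:ℝ), u ^ c * φ (b * u) =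
      b ^ (-(c+1)) * ∫ u in Set.Ioi (0:ℝ), u ^ c * φ u := by
  have h := integral_comp_mul_left_Ioi (fun u : ℝ => u ^ c * φ u) 0 hb
  rw [mul_zero] at h
  have h2 : (∫ x in Set.Ioi (0:ℝ), (b*x) ^ c * φ (b*x))
      = b ^ c * ∫ x in Set.Ioi (0:ℝ), x ^ c * φ (b*x) := by
    rw [← integral_const_mul]
    refine setIntegral_congr_fun measurableSet_Ioi (fun x hx => ?_)
    rw [Real.mul_rpow hb.le (le_of_lt hx)]; ring
  rw [h2, smul_eq_mul] at h
  have hbc : (b:ℝ) ^ c ≠ 0 := (Real.rpow_pos_of_pos hb c).ne'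
  have : (∫ x in Set.Ioi (0:ℝ), x ^ c * φ (b*x))
      = (b ^ c)⁻¹ * (b⁻¹ * ∫ x in Set.Ioi (0:ℝ), x ^ c * φ x) := by
    rw [← h, ← mul_assoc, inv_mul_cancel₀ hbc, one_mul]
  rw [this, Real.rpow_neg hb.le, Real.rpow_add hb, Real.rpow_one, mul_inv]
  ring

/-- for `Im z > 1/2`,
`∫₀^∞ E(f)(u) u^{-iz} d*u = ζ(1/2 - iz) ψ(z)` with `ψ(z) = ∫₀^∞ f(u) u^{1/2-iz} d*u`. -/
theorem stmt5 (f : SchwartzMap ℝ ℝ) (hf : f ∈ S0ev) (z : ℂ) (hz : 1 / 2 < z.im) :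
    (∫ u in Set.Ioi (0:ℝ),
        ((Real.sqrt u * ∑' n : ℕ, f (((n : ℝ) + 1) * u) : ℝ) : ℂ) *
          (u : ℂ) ^ (-(Complex.I * z)) / (u : ℂ)) =
      riemannZeta (1 / 2 - Complex.I * z) *
        ∫ u in Set.Ioi (0:ℝ), (f u : ℂ) * (u : ℂ) ^ ((1 : ℂ) / 2 - Complex.I * z) / (u : ℂ) := by
  set s : ℂ := 1 / 2 - Complex.I * z with hs_def
  have hs1 : 1 < s.re := by
    have : s.re = 1 / 2 + z.im := by
      simp [hs_def, Complex.sub_re, Complex.mul_re]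
    rw [this]; linarith
  set g : ℝ → ℂ := fun u => (f u : ℂ) with hg_def
  have hg_cont : Continuous g := Complex.continuous_ofReal.comp f.continuous
  -- Mellin convergence of g at s
  have htop : g =O[Filter.atTop] fun x : ℝ => x ^ (-(s.re + 1)) := by
    have h1 := f.isBigO_cocompact_rpow (-(s.re + 1))
    have h1' : g =O[Filter.cocompact ℝ] fun x => ‖x‖ ^ (-(s.re + 1)) := by
      rw [← Asymptotics.isBigO_norm_left] at h1 ⊢
      simpa [hg_def, Complex.norm_real] using h1
    refine (h1'.mono atTop_le_cocompact).congr' Filter.EventuallyEq.rfl ?_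
    filter_upwards [Filter.eventually_ge_atTop (0:ℝ)] with x hx
    rw [Real.norm_of_nonneg hx]
  have hbot : g =O[nhdsWithin 0 (Set.Ioi (0:ℝ))] fun x : ℝ => x ^ (-(0:ℝ)) := by
    have : Filter.Tendsto g (nhdsWithin 0 (Set.Ioi (0:ℝ))) (nhds (g 0)) :=
      (hg_cont.tendsto 0).mono_left nhdsWithin_le_nhds
    simpa [neg_zero, Real.rpow_zero] using this.isBigO_one ℝ
  have h_mc : MellinConvergent g s :=
    mellinConvergent_of_isBigO_rpow (hg_cont.locallyIntegrable.locallyIntegrableOn _)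
      htop (by linarith) hbot (by linarith)
  -- the summand functions
  set F : ℕ → ℝ → ℂ := fun n u => (u : ℂ) ^ (s - 1) • g (((n : ℝ) + 1) * u) with hF_def
  have hnpos : ∀ n : ℕ, (0:ℝ) < (n : ℝ) + 1 := fun n => by positivity
  have h_mcn : ∀ n : ℕ, MellinConvergent (fun t => g (((n : ℝ) + 1) * t)) s :=
    fun n => (MellinConvergent.comp_mul_left (hnpos n)).mpr h_mc
  have hInt : ∀ n : ℕ, Integrable (F n) (volume.restrict (Set.Ioi (0:ℝ))) := fun n => h_mcn n
  -- norms of the terms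
  have hC : ∀ n : ℕ, (∫ u in Set.Ioi (0:ℝ), ‖F n u‖) =
      ((n : ℝ) + 1) ^ (-(s.re)) * ∫ u in Set.Ioi (0:ℝ), u ^ (s.re - 1) * |f u| := by
    intro n
    have heq : ∀ u ∈ Set.Ioi (0:ℝ),
        ‖F n u‖ = u ^ (s.re - 1) * |f (((n : ℝ) + 1) * u)| := by
      intro u hu
      rw [hF_def]
      simp only [norm_smul, Complex.norm_cpow_eq_rpow_re_of_pos hu,
        Complex.sub_re, Complex.one_re, hg_def, Complex.norm_real, Real.norm_eq_abs]
    rw [setIntegral_congr_fun measurableSet_Ioi heq,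
      aux_subst (fun u => |f u|) (s.re - 1) (hnpos n), sub_add_cancel]
  have hsum : Summable (fun n : ℕ => ∫ u in Set.Ioi (0:ℝ), ‖F n u‖) := by
    simp_rw [hC]
    apply Summable.mul_right
    have h := (Real.summable_nat_rpow (p := -s.re)).mpr (by linarith)
    have h2 := h.comp_injective Nat.succ_injective
    refine h2.congr fun n => ?_
    simp [Function.comp, Nat.succ_eq_add_one]
  -- interchange sum and integral
  have key := MeasureTheory.integral_tsum_of_summable_integral_norm
    (μ := volume.restrict (Set.Ioi (0:ℝ))) (F := F) hInt hsum
  -- identify individual integrals with mellin transforms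
  have hmell : ∀ n : ℕ, (∫ u in Set.Ioi (0:ℝ), F n u) =
      (((n : ℝ) + 1 : ℝ) : ℂ) ^ (-s) • mellin g s := fun n =>
    mellin_comp_mul_left g s (hnpos n)
  -- rewrite the LHS integrand
  have hLHS : ∀ u ∈ Set.Ioi (0:ℝ),
      ((Real.sqrt u * ∑' n : ℕ, f (((n : ℝ) + 1) * u) : ℝ) : ℂ) *
          (u : ℂ) ^ (-(Complex.I * z)) / (u : ℂ) = ∑' n : ℕ, F n u := by
    intro u hu
    have hu0 : (0:ℝ) < u := hu
    have hne : (u : ℂ) ≠ 0 := Complex.ofReal_ne_zero.mpr hu0.ne'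
    have hsqrt : ((Real.sqrt u : ℝ) : ℂ) = (u : ℂ) ^ (1/2 : ℂ) := by
      rw [Real.sqrt_eq_rpow, Complex.ofReal_cpow hu0.le]
      norm_num
    have hpow : ((Real.sqrt u : ℝ) : ℂ) * (u : ℂ) ^ (-(Complex.I * z)) / (u : ℂ)
        = (u : ℂ) ^ (s - 1) := by
      rw [hsqrt, ← Complex.cpow_add _ _ hne, Complex.cpow_sub _ _ hne, Complex.cpow_one]
      congr 2
    calc ((Real.sqrt u * ∑' n : ℕ, f (((n : ℝ) + 1) * u) : ℝ) : ℂ) *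
          (u : ℂ) ^ (-(Complex.I * z)) / (u : ℂ)
        = (((Real.sqrt u : ℝ) : ℂ) * (u : ℂ) ^ (-(Complex.I * z)) / (u : ℂ)) *
            ((∑' n : ℕ, f (((n : ℝ) + 1) * u) : ℝ) : ℂ) := by
          push_cast
          ring
      _ = (u : ℂ) ^ (s - 1) * ∑' n : ℕ, ((f (((n : ℝ) + 1) * u) : ℝ) : ℂ) := by
          rw [hpow, Complex.ofReal_tsum]
      _ = ∑' n : ℕ, F n u := by
          rw [← tsum_mul_left]
          exact tsum_congr fun n => by rw [hF_def]; simp [hg_def, smul_eq_mul]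
  rw [setIntegral_congr_fun measurableSet_Ioi hLHS, ← key]
  -- rewrite the RHS integral as mellin g s
  have hpsi : (∫ u in Set.Ioi (0:ℝ), (f u : ℂ) * (u : ℂ) ^ ((1 : ℂ) / 2 - Complex.I * z) / (u : ℂ))
      = mellin g s := by
    refine setIntegral_congr_fun measurableSet_Ioi (fun u hu => ?_) |>.symm
    have hu0 : (0:ℝ) < u := hu
    have hne : (u : ℂ) ≠ 0 := Complex.ofReal_ne_zero.mpr hu0.ne'
    rw [smul_eq_mul, hg_def, mul_comm, Complex.cpow_sub _ _ hne, Complex.cpow_one,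
      mul_div_assoc, hs_def]
  rw [hpsi, zeta_eq_tsum_one_div_nat_add_one_cpow hs1, ← tsum_mul_right]
  refine tsum_congr fun n => ?_
  rw [hmell n]
  have hcast : (((n : ℝ) + 1 : ℝ) : ℂ) = (n : ℂ) + 1 := by push_cast; ring
  rw [hcast, smul_eq_mul, Complex.cpow_neg, one_div]
end

section
/- Fix L > 0 and a positive integer n. With ξ_n(x) = (-1)^n√(2/L)cos(2πnx/L) on [-L/2,L/2] extended by 0, one has for y ∈ [0,L]: (ξ_n * ξ_n*)(y) = ((L−y)/L)·cos(2πny/L) − sin(2πny/L)/(2πn). -/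
open MeasureTheory Set

/-- The cosine basis function `ξ_n(x) = (-1)^n √(2/L) cos(2πnx/L)` on `[-L/2, L/2]`,
extended by `0` outside that interval. -/
noncomputable def xi (L : ℝ) (n : ℕ) (x : ℝ) : ℝ :=
  if x ∈ Set.Icc (-(L / 2)) (L / 2) then
    (-1 : ℝ) ^ n * Real.sqrt (2 / L) * Real.cos (2 * Real.pi * n * x / L)
  else 0

/-- for a positive integer `n` and `y ∈ [0, L]`,
`(ξ_n * ξ_n^*)(y) = ((L-y)/L) cos(2πny/L) - sin(2πny/L)/(2πn)`,
where `(φ * ψ^*)(y) = ∫ φ(x) ψ(x - y) dx` (and `ξ_n^* = ξ_n`). -/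
theorem stmt18 (L : ℝ) (hL : 0 < L) (n : ℕ) (hn : 0 < n)
    (y : ℝ) (hy : y ∈ Set.Icc (0:ℝ) L) :
    (∫ x, xi L n x * xi L n (x - y)) =
      ((L - y) / L) * Real.cos (2 * Real.pi * n * y / L) -
        Real.sin (2 * Real.pi * n * y / L) / (2 * Real.pi * n) := by
  obtain ⟨hy0, hyL⟩ := hy
  have hπ : (0:ℝ) < Real.pi := Real.pi_pos
  have hnpos : (0:ℝ) < n := by exact_mod_cast hn
  set g : ℝ → ℝ := fun x =>
    (2 / L) * (Real.cos (2 * Real.pi * n * x / L) * Real.cos (2 * Real.pi * n * (x - y) / L))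
    with hg
  have hind : ∀ x, xi L n x * xi L n (x - y) =
      Set.indicator (Set.Icc (y - L / 2) (L / 2)) g x := by
    intro x
    rw [Set.indicator_apply]
    by_cases hx : x ∈ Set.Icc (y - L / 2) (L / 2)
    · rw [if_pos hx]
      obtain ⟨h1, h2⟩ := hx
      have m1 : x ∈ Set.Icc (-(L / 2)) (L / 2) := ⟨by linarith, h2⟩
      have m2 : x - y ∈ Set.Icc (-(L / 2)) (L / 2) := ⟨by linarith, by linarith⟩
      simp only [xi, if_pos m1, if_pos m2]
      have hs : Real.sqrt (2 / L) * Real.sqrt (2 / L) = 2 / L :=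
        Real.mul_self_sqrt (by positivity)
      have hm : ((-1 : ℝ) ^ n) * ((-1 : ℝ) ^ n) = 1 := by
        rw [← pow_add, ← two_mul, pow_mul]; norm_num
      calc ((-1:ℝ) ^ n * Real.sqrt (2 / L) * Real.cos (2 * Real.pi * n * x / L)) *
            ((-1:ℝ) ^ n * Real.sqrt (2 / L) * Real.cos (2 * Real.pi * n * (x - y) / L))
          = (((-1:ℝ) ^ n) * ((-1:ℝ) ^ n)) * (Real.sqrt (2 / L) * Real.sqrt (2 / L)) *
            (Real.cos (2 * Real.pi * n * x / L) * Real.cos (2 * Real.pi * n * (x - y) / L)) := by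
            ring
        _ = g x := by rw [hs, hm, hg]; ring
    · rw [if_neg hx]
      rcases lt_or_ge x (y - L / 2) with h | h
      · have : x - y ∉ Set.Icc (-(L / 2)) (L / 2) := by
          simp only [Set.mem_Icc, not_and_or, not_le]
          left; linarith
        simp [xi, this]
      · have hx2 : ¬ x ≤ L / 2 := by
          by_contra hc
          exact hx ⟨h, hc⟩
        have : x ∉ Set.Icc (-(L / 2)) (L / 2) := by
          simp only [Set.mem_Icc, not_and_or, not_le]
          right; linarith
        simp [xi, this]
  have hle : y - L / 2 ≤ L / 2 := by linarith
  have step1 : (∫ x, xi L n x * xi L n (x - y)) =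
      ∫ x in (y - L / 2)..(L / 2), g x := by
    simp_rw [hind]
    rw [MeasureTheory.integral_indicator measurableSet_Icc,
      MeasureTheory.integral_Icc_eq_integral_Ioc,
      ← intervalIntegral.integral_of_le hle]
  rw [step1]
  -- antiderivative
  set F : ℝ → ℝ := fun x =>
    (1 / L) * (Real.cos (2 * Real.pi * n * y / L) * x) +
      (1 / (4 * Real.pi * n)) * Real.sin (2 * Real.pi * n * (2 * x - y) / L) with hF
  have hderiv : ∀ x ∈ Set.uIcc (y - L / 2) (L / 2), HasDerivAt F (g x) x := by
    intro x _
    have hlin : HasDerivAt (fun x : ℝ => 2 * Real.pi * n * (2 * x - y) / L)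
        (2 * Real.pi * n * 2 / L) x := by
      have h0 : HasDerivAt (fun x : ℝ => 2 * x - y) 2 x := by
        simpa using ((hasDerivAt_id x).const_mul (2:ℝ)).sub_const y
      have h1 := (h0.const_mul (2 * Real.pi * (n:ℝ))).div_const L
      simpa [mul_comm] using h1
    have hsin := (hlin.sin).const_mul (1 / (4 * Real.pi * (n:ℝ)))
    have hlin2 : HasDerivAt (fun x : ℝ => (1 / L) * (Real.cos (2 * Real.pi * n * y / L) * x))
        ((1 / L) * Real.cos (2 * Real.pi * n * y / L)) x := by
      simpa using ((hasDerivAt_id x).const_mul (Real.cos (2 * Real.pi * n * y / L))).const_mul (1/L)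
    have := hlin2.add hsin
    convert this using 1
    case e'_4 => exact rfl
    case e'_5 => exact rfl
    case e'_8 => exact rfl
    have hc1 : Real.cos (2 * Real.pi * n * (2 * x - y) / L) =
        Real.cos (2 * Real.pi * n * x / L + 2 * Real.pi * n * (x - y) / L) := by
      congr 1; field_simp; ring
    have hc2 : Real.cos (2 * Real.pi * n * y / L) =
        Real.cos (2 * Real.pi * n * x / L - 2 * Real.pi * n * (x - y) / L) := by
      congr 1; field_simp; ring
    rw [hg]
    simp only
    rw [hc1, hc2, Real.cos_add, Real.cos_sub]
    field_simp
    ring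
  have hcont : ContinuousOn g (Set.uIcc (y - L / 2) (L / 2)) := by
    apply Continuous.continuousOn
    fun_prop
  rw [intervalIntegral.integral_eq_sub_of_hasDerivAt hderiv
    (hcont.intervalIntegrable)]
  rw [hF]
  simp only
  have harg1 : 2 * Real.pi * (n:ℝ) * (2 * (L / 2) - y) / L =
      (n:ℝ) * (2 * Real.pi) - 2 * Real.pi * n * y / L := by
    field_simp
  have harg2 : 2 * Real.pi * (n:ℝ) * (2 * (y - L / 2) - y) / L =
      -((n:ℝ) * (2 * Real.pi) - 2 * Real.pi * n * y / L) := by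
    field_simp; ring
  rw [harg1, harg2, Real.sin_neg, Real.sin_nat_mul_two_pi_sub]
  field_simp
  ring
end
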